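/- Let 3 ≤ d₁ ≤ d₂ ≤ d₃ and ω = e^{2πi/3}. In ℂ^{d₁} ⊗ ℂ^{d₂} ⊗ ℂ^{d₃}, the d₃+1 vectors |φ₀⟩ = |000⟩ − |111⟩; |φᵢ⟩ = |i00⟩ + ω|0i0⟩ + ω²|00i⟩ for 1 ≤ i ≤ d₁−1; |φⱼ⟩ = |0j0⟩ − |00j⟩ for d₁ ≤ j ≤ d₂−1; |φₖ⟩ = |00k⟩ − |2,1,(k−1)⟩ for d₂ ≤ k ≤ d₃−1; and the stopper |S⟩ = (∑_{a<d₁}|a⟩)⊗(∑_{b<d₂}|b⟩)⊗(∑_{c<d₃}|c⟩) are pairwise orthogonal. -/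
import Mathlib


open Finset

/-- Coefficient function of the basis vector `|a⟩⊗|b⟩⊗|c⟩` in
`ℂ^{d₁} ⊗ ℂ^{d₂} ⊗ ℂ^{d₃}`. -/
noncomputable def ket3 (d₁ d₂ d₃ : ℕ) (a b c : ℕ) : Fin d₁ → Fin d₂ → Fin d₃ → ℂ :=
  fun x y z => if (x : ℕ) = a ∧ (y : ℕ) = b ∧ (z : ℕ) = c then 1 else 0

/-- The `d₃+1` states of Theorem 4 (Eq. (7)) in `ℂ^{d₁} ⊗ ℂ^{d₂} ⊗ ℂ^{d₃}`,
with `ω = exp(2πi/3)`: index `0` is `|000⟩ − |111⟩`; `1 ≤ i ≤ d₁−1` gives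
`|i00⟩ + ω|0i0⟩ + ω²|00i⟩`; `d₁ ≤ j ≤ d₂−1` gives `|0j0⟩ − |00j⟩`;
`d₂ ≤ k ≤ d₃−1` gives `|00k⟩ − |2,1,(k−1)⟩`; index `d₃` is the stopper. -/
noncomputable def stateT (d₁ d₂ d₃ : ℕ) (i : ℕ) : Fin d₁ → Fin d₂ → Fin d₃ → ℂ :=
  if i = 0 then ket3 d₁ d₂ d₃ 0 0 0 - ket3 d₁ d₂ d₃ 1 1 1
  else if i < d₁ then
    ket3 d₁ d₂ d₃ i 0 0 + (Complex.exp (2 * Real.pi * Complex.I / 3)) • ket3 d₁ d₂ d₃ 0 i 0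
      + (Complex.exp (2 * Real.pi * Complex.I / 3)) ^ 2 • ket3 d₁ d₂ d₃ 0 0 i
  else if i < d₂ then ket3 d₁ d₂ d₃ 0 i 0 - ket3 d₁ d₂ d₃ 0 0 i
  else if i < d₃ then ket3 d₁ d₂ d₃ 0 0 i - ket3 d₁ d₂ d₃ 2 1 (i - 1)
  else fun _ _ _ => 1

lemma sum_indicator {d t : ℕ} (ht : t < d) (f : Fin d → ℂ) :
    ∑ x : Fin d, (if (x : ℕ) = t then f x else 0) = f ⟨t, ht⟩ := by
  rw [Finset.sum_eq_single (⟨t, ht⟩ : Fin d)]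
  · simp
  · intro x _ hx
    rw [if_neg]
    simpa [Fin.ext_iff] using hx
  · simp

lemma conj_ket3 (d₁ d₂ d₃ a b c : ℕ) (x : Fin d₁) (y : Fin d₂) (z : Fin d₃) :
    (starRingEnd ℂ) (ket3 d₁ d₂ d₃ a b c x y z) = ket3 d₁ d₂ d₃ a b c x y z := by
  simp [ket3, apply_ite]

lemma sum3_ket3 (d₁ d₂ d₃ a b c : ℕ) (ha : a < d₁) (hb : b < d₂) (hc : c < d₃) :
    ∑ x : Fin d₁, ∑ y : Fin d₂, ∑ z : Fin d₃, ket3 d₁ d₂ d₃ a b c x y z = 1 := by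
  simp only [ket3, ite_and, Finset.sum_ite_irrel, Finset.sum_const_zero]
  rw [sum_indicator ha, sum_indicator hb, sum_indicator hc]

lemma omega_pow_three : (Complex.exp (2 * Real.pi * Complex.I / 3)) ^ 3 = 1 := by
  rw [← Complex.exp_nat_mul]
  rw [show ((3:ℕ):ℂ) * (2 * Real.pi * Complex.I / 3) = 2 * Real.pi * Complex.I by push_cast; ring]
  exact Complex.exp_two_pi_mul_I

lemma omega_ne_one : Complex.exp (2 * Real.pi * Complex.I / 3) ≠ 1 := by
  have h := (Complex.isPrimitiveRoot_exp 3 (by norm_num)).ne_one (by norm_num)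
  simpa using h

lemma cube_sum {z : ℂ} (h3 : z ^ 3 = 1) (h1 : z ≠ 1) : 1 + z + z ^ 2 = 0 := by
  have h : (z - 1) * (1 + z + z ^ 2) = 0 := by
    have he : (z - 1) * (1 + z + z ^ 2) = z ^ 3 - 1 := by ring
    rw [he, h3, sub_self]
  rcases mul_eq_zero.mp h with h | h
  · exact absurd (sub_eq_zero.mp h) h1
  · exact h


set_option maxHeartbeats 2000000 in
lemma key (d₁ d₂ d₃ : ℕ) (h1 : 3 ≤ d₁) (h2 : d₁ ≤ d₂) (h3 : d₂ ≤ d₃)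
    {i j : ℕ} (hij : i < j) (hj : j ≤ d₃) :
    ∑ a : Fin d₁, ∑ b : Fin d₂, ∑ c : Fin d₃,
      (starRingEnd ℂ) (stateT d₁ d₂ d₃ i a b c) * stateT d₁ d₂ d₃ j a b c = 0 := by
  rcases eq_or_lt_of_le hj with heq | hjlt
  · -- stopper case
    subst heq
    have hsj : stateT d₁ d₂ j j = fun _ _ _ => 1 := by
      rw [stateT, if_neg (by omega), if_neg (by omega), if_neg (by omega), if_neg (by omega)]
    rw [hsj]
    rcases Nat.eq_zero_or_pos i with rfl | hi0
    · rw [stateT, if_pos rfl]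
      simp only [Pi.sub_apply, map_sub, mul_one, conj_ket3, Finset.sum_sub_distrib]
      rw [sum3_ket3 _ _ _ _ _ _ (by omega) (by omega) (by omega),
        sum3_ket3 _ _ _ _ _ _ (by omega) (by omega) (by omega), sub_self]
    · rcases lt_or_ge i d₁ with hd1 | hd1
      · rw [stateT, if_neg (by omega), if_pos hd1]
        simp only [Pi.add_apply, Pi.smul_apply, smul_eq_mul, map_add, map_mul, map_pow,
          mul_one, conj_ket3, Finset.sum_add_distrib, ← Finset.mul_sum]
        rw [sum3_ket3 _ _ _ _ _ _ (by omega) (by omega) (by omega),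
          sum3_ket3 _ _ _ _ _ _ (by omega) (by omega) (by omega),
          sum3_ket3 _ _ _ _ _ _ (by omega) (by omega) (by omega)]
        set w := (starRingEnd ℂ) (Complex.exp (2 * Real.pi * Complex.I / 3)) with hw
        have hw3 : w ^ 3 = 1 := by
          rw [hw, ← map_pow, omega_pow_three, map_one]
        have hw1 : w ≠ 1 := by
          intro h
          apply omega_ne_one
          have := congrArg (starRingEnd ℂ) h
          simpa [hw, Complex.conj_conj] using this
        have := cube_sum hw3 hw1
        rw [mul_one, mul_one]
        linear_combination this
      · rcases lt_or_ge i d₂ with hd2 | hd2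
        · rw [stateT, if_neg (by omega), if_neg (by omega), if_pos hd2]
          simp only [Pi.sub_apply, map_sub, mul_one, conj_ket3, Finset.sum_sub_distrib]
          rw [sum3_ket3 _ _ _ _ _ _ (by omega) (by omega) (by omega),
            sum3_ket3 _ _ _ _ _ _ (by omega) (by omega) (by omega), sub_self]
        · rw [stateT, if_neg (by omega), if_neg (by omega), if_neg (by omega), if_pos (by omega)]
          simp only [Pi.sub_apply, map_sub, mul_one, conj_ket3, Finset.sum_sub_distrib]
          rw [sum3_ket3 _ _ _ _ _ _ (by omega) (by omega) (by omega),
            sum3_ket3 _ _ _ _ _ _ (by omega) (by omega) (by omega), sub_self]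
  · -- non-stopper: summand is pointwise zero
    refine Finset.sum_eq_zero fun a _ => Finset.sum_eq_zero fun b _ =>
      Finset.sum_eq_zero fun c _ => ?_
    simp only [stateT]
    split_ifs <;>
      simp only [Pi.add_apply, Pi.sub_apply, Pi.smul_apply, smul_eq_mul, ket3,
        map_sub, map_add, map_mul, map_pow, map_one, map_zero] <;>
      split_ifs <;>
      first
        | omega
        | simp

theorem statesT_pairwise_orthogonal (d₁ d₂ d₃ : ℕ) (h1 : 3 ≤ d₁) (h2 : d₁ ≤ d₂) (h3 : d₂ ≤ d₃) :
    ∀ i j : ℕ, i ≤ d₃ → j ≤ d₃ → i ≠ j →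
      ∑ a : Fin d₁, ∑ b : Fin d₂, ∑ c : Fin d₃,
        (starRingEnd ℂ) (stateT d₁ d₂ d₃ i a b c) * stateT d₁ d₂ d₃ j a b c = 0 := by
  intro i j hi hj hij
  rcases lt_or_gt_of_ne hij with h | h
  · exact key d₁ d₂ d₃ h1 h2 h3 h hj
  · have h0 := key d₁ d₂ d₃ h1 h2 h3 h hi
    have hc : (starRingEnd ℂ) (∑ a : Fin d₁, ∑ b : Fin d₂, ∑ c : Fin d₃,
        (starRingEnd ℂ) (stateT d₁ d₂ d₃ i a b c) * stateT d₁ d₂ d₃ j a b c)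
        = ∑ a : Fin d₁, ∑ b : Fin d₂, ∑ c : Fin d₃,
        (starRingEnd ℂ) (stateT d₁ d₂ d₃ j a b c) * stateT d₁ d₂ d₃ i a b c := by
      simp only [map_sum, map_mul, Complex.conj_conj]
      exact Finset.sum_congr rfl fun a _ => Finset.sum_congr rfl fun b _ =>
        Finset.sum_congr rfl fun c _ => mul_comm _ _
    have hz : (starRingEnd ℂ) (∑ a : Fin d₁, ∑ b : Fin d₂, ∑ c : Fin d₃,
        (starRingEnd ℂ) (stateT d₁ d₂ d₃ i a b c) * stateT d₁ d₂ d₃ j a b c) = 0 := by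
      rw [hc, h0]
    have := congrArg (starRingEnd ℂ) hz
    simpa [Complex.conj_conj] using this
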